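/- Let Z ⊆ ℝⁿ be nonempty, compact and convex, f : ℝⁿ → ℝ continuous and strictly convex, G a real m×n matrix, h ∈ ℝᵐ, and φ > 0. Define L_φ(z,μ) := f(z) + ⟨μ, Gz + h⟩ − (φ/2)‖μ‖². Then L_φ possesses exactly one saddle point over Z × ℝᵐ₊, i.e. exactly one pair (z*, μ*) ∈ Z × ℝᵐ₊ with L_φ(z*, μ) ≤ L_φ(z*, μ*) ≤ L_φ(z, μ*) for all z ∈ Z and μ ∈ ℝᵐ₊. -/

import Mathlib

open scoped InnerProductSpace
open Finset

private lemma scalar_max_le (φ t v : ℝ) (hφ : 0 < φ) (ht : 0 ≤ t) :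
    t * v - φ / 2 * t ^ 2 ≤ max v 0 / φ * v - φ / 2 * (max v 0 / φ) ^ 2 := by
  have hmm : max v 0 * v = max v 0 ^ 2 := by
    rcases le_total v 0 with hv | hv
    · simp [max_eq_right hv]
    · simp [max_eq_left hv]; ring
  have h1 : t * v - φ / 2 * t ^ 2 ≤ max v 0 ^ 2 / (2 * φ) := by
    rcases le_total v 0 with hv | hv
    · rw [max_eq_right hv]
      have h3 : t * v ≤ 0 := mul_nonpos_of_nonneg_of_nonpos ht hv
      have h4 : (0:ℝ) ^ 2 / (2 * φ) = 0 := by simp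
      rw [h4]
      nlinarith [sq_nonneg t]
    · rw [max_eq_left hv, le_div_iff₀ (by positivity)]
      nlinarith [sq_nonneg (φ * t - v)]
  have h2 : max v 0 / φ * v - φ / 2 * (max v 0 / φ) ^ 2 = max v 0 ^ 2 / (2 * φ) := by
    rw [div_mul_eq_mul_div, hmm, div_pow]
    field_simp
    ring
  rw [h2]; exact h1

private lemma sq_max_le (x d : ℝ) :
    max (x + d) 0 ^ 2 ≤ max x 0 ^ 2 + 2 * max x 0 * d + d ^ 2 := by
  rcases le_total (x + d) 0 with h1 | h1 <;> rcases le_total x 0 with h2 | h2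
  · rw [max_eq_right h1, max_eq_right h2]; nlinarith
  · rw [max_eq_right h1, max_eq_left h2]; nlinarith
  · rw [max_eq_left h1, max_eq_right h2]; nlinarith
  · rw [max_eq_left h1, max_eq_left h2]; nlinarith

private lemma le_of_small (A B C : ℝ) (hC : 0 ≤ C)
    (H : ∀ t : ℝ, 0 < t → t ≤ 1 → A ≤ B + t * C) : A ≤ B := by
  refine le_of_forall_pos_le_add fun ε hε => ?_
  have hC1 : (0:ℝ) < C + 1 := by linarith
  set t := min 1 (ε / (C + 1)) with htdef
  have ht0 : 0 < t := lt_min one_pos (by positivity)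
  have ht1 : t ≤ 1 := min_le_left _ _
  have h := H t ht0 ht1
  have : t * C ≤ ε := by
    have h2 : t ≤ ε / (C + 1) := min_le_right _ _
    calc t * C ≤ (ε / (C + 1)) * C := by nlinarith
    _ ≤ ε := by rw [div_mul_eq_mul_div, div_le_iff₀ hC1]; nlinarith
  linarith

set_option maxHeartbeats 2000000 in
theorem regularized_saddle_exists_unique {n m : ℕ}
    (Z : Set (EuclideanSpace ℝ (Fin n)))
    (hZne : Z.Nonempty) (hZcomp : IsCompact Z) (hZconv : Convex ℝ Z)
    (f : EuclideanSpace ℝ (Fin n) → ℝ)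
    (hfcont : Continuous f) (hfconv : StrictConvexOn ℝ Set.univ f)
    (G : Matrix (Fin m) (Fin n) ℝ) (h : EuclideanSpace ℝ (Fin m))
    (φ : ℝ) (hφ : 0 < φ) :
    ∃! y : EuclideanSpace ℝ (Fin n) × EuclideanSpace ℝ (Fin m),
      (y.1 ∈ Z ∧ ∀ j, 0 ≤ y.2 j) ∧
      ∀ z ∈ Z, ∀ μ : EuclideanSpace ℝ (Fin m), (∀ j, 0 ≤ μ j) →
        f y.1 + ⟪μ, Matrix.toEuclideanLin G y.1 + h⟫_ℝ - φ / 2 * ‖μ‖ ^ 2 ≤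
          f y.1 + ⟪y.2, Matrix.toEuclideanLin G y.1 + h⟫_ℝ - φ / 2 * ‖y.2‖ ^ 2 ∧
        f y.1 + ⟪y.2, Matrix.toEuclideanLin G y.1 + h⟫_ℝ - φ / 2 * ‖y.2‖ ^ 2 ≤
          f z + ⟪y.2, Matrix.toEuclideanLin G z + h⟫_ℝ - φ / 2 * ‖y.2‖ ^ 2 := by
  classical
  set g : EuclideanSpace ℝ (Fin n) → EuclideanSpace ℝ (Fin m) :=
    fun z => Matrix.toEuclideanLin G z + h with hgdef
  have hgapp : ∀ z, Matrix.toEuclideanLin G z + h = g z := fun z => rfl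
  have hinner : ∀ (x y : EuclideanSpace ℝ (Fin m)), ⟪x, y⟫_ℝ = ∑ j, x j * y j := by
    intro x y; simp [PiLp.inner_apply, RCLike.inner_apply, conj_trivial]
    exact Finset.sum_congr rfl fun j _ => mul_comm _ _
  have hnorm : ∀ x : EuclideanSpace ℝ (Fin m), ‖x‖ ^ 2 = ∑ j, x j ^ 2 := by
    intro x
    rw [← real_inner_self_eq_norm_sq]
    simp only [PiLp.inner_apply, RCLike.inner_apply, conj_trivial]
    exact Finset.sum_congr rfl fun j _ => by ring
  have hAcont : Continuous fun z : EuclideanSpace ℝ (Fin n) => Matrix.toEuclideanLin G z :=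
    (Matrix.toEuclideanLin G).continuous_of_finiteDimensional
  have hcoord : ∀ j, Continuous fun z : EuclideanSpace ℝ (Fin n) => g z j := by
    intro j
    have h1 : Continuous fun w : EuclideanSpace ℝ (Fin m) => w j :=
      (EuclideanSpace.proj j : EuclideanSpace ℝ (Fin m) →L[ℝ] ℝ).continuous
    exact h1.comp (hAcont.add continuous_const)
  have hgcomb : ∀ (x y : EuclideanSpace ℝ (Fin n)) (t : ℝ) (j : Fin m),
      g ((1 - t) • x + t • y) j = g x j + t * (g y j - g x j) := by
    intro x y t j
    have e1 : g ((1 - t) • x + t • y) j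
        = (Matrix.toEuclideanLin G ((1 - t) • x + t • y)) j + h j := rfl
    rw [e1, map_add, map_smul, map_smul]
    have e2 : ((1 - t) • Matrix.toEuclideanLin G x + t • Matrix.toEuclideanLin G y) j
        = (1 - t) * (Matrix.toEuclideanLin G x) j + t * (Matrix.toEuclideanLin G y) j := rfl
    rw [e2]
    have e3 : g x j = (Matrix.toEuclideanLin G x) j + h j := rfl
    have e4 : g y j = (Matrix.toEuclideanLin G y) j + h j := rfl
    rw [e3, e4]; ring
  have hginner : ∀ (μ : EuclideanSpace ℝ (Fin m)) (x y : EuclideanSpace ℝ (Fin n)) (t : ℝ),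
      ⟪μ, g ((1-t) • x + t • y)⟫_ℝ = ⟪μ, g x⟫_ℝ + t * (⟪μ, g y⟫_ℝ - ⟪μ, g x⟫_ℝ) := by
    intro μ x y t
    simp only [hinner]
    rw [← Finset.sum_sub_distrib, Finset.mul_sum, ← Finset.sum_add_distrib]
    refine Finset.sum_congr rfl fun j _ => ?_
    rw [hgcomb]; ring
  -- the regularized objective
  set Fobj : EuclideanSpace ℝ (Fin n) → ℝ :=
    fun z => f z + (2 * φ)⁻¹ * ∑ j, max (g z j) 0 ^ 2 with hFdef
  have hFcont : Continuous Fobj := by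
    refine hfcont.add (continuous_const.mul ?_)
    exact continuous_finset_sum _ fun j _ => ((hcoord j).max continuous_const).pow 2
  obtain ⟨z0, hz0Z, hz0min⟩ := hZcomp.exists_isMinOn hZne hFcont.continuousOn
  set μ0 : EuclideanSpace ℝ (Fin m) := WithLp.toLp 2 (fun j => max (g z0 j) 0 / φ) with hμ0def
  have hμ0j : ∀ j, μ0 j = max (g z0 j) 0 / φ := fun j => rfl
  have hμ0pos : ∀ j, 0 ≤ μ0 j := fun j => by rw [hμ0j]; positivity
  -- left saddle inequality
  have left : ∀ μ : EuclideanSpace ℝ (Fin m), (∀ j, 0 ≤ μ j) →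
      ⟪μ, g z0⟫_ℝ - φ / 2 * ‖μ‖ ^ 2 ≤ ⟪μ0, g z0⟫_ℝ - φ / 2 * ‖μ0‖ ^ 2 := by
    intro μ hμ
    rw [hinner, hinner, hnorm, hnorm, Finset.mul_sum, Finset.mul_sum,
      ← Finset.sum_sub_distrib, ← Finset.sum_sub_distrib]
    refine Finset.sum_le_sum fun j _ => ?_
    rw [hμ0j]
    exact scalar_max_le φ (μ j) (g z0 j) hφ (hμ j)
  -- right saddle inequality
  have right : ∀ z ∈ Z, f z0 + ⟪μ0, g z0⟫_ℝ ≤ f z + ⟪μ0, g z⟫_ℝ := by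
    intro z hz
    set Δ : Fin m → ℝ := fun j => g z j - g z0 j with hΔ
    set C : ℝ := (2 * φ)⁻¹ * ∑ j, Δ j ^ 2 with hCdef
    have hCpos : 0 ≤ C :=
      mul_nonneg (inv_nonneg.mpr (by linarith)) (Finset.sum_nonneg fun j _ => sq_nonneg _)
    refine le_of_small _ _ C hCpos ?_
    intro t ht0 ht1
    set zt := (1 - t) • z0 + t • z with hzt
    have hztZ : zt ∈ Z := hZconv hz0Z hz (by linarith) ht0.le (by ring)
    have hmin : Fobj z0 ≤ Fobj zt := isMinOn_iff.mp hz0min zt hztZ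
    simp only [hFdef] at hmin
    have hfcomb : f zt ≤ (1 - t) * f z0 + t * f z :=
      hfconv.convexOn.2 (Set.mem_univ z0) (Set.mem_univ z) (by linarith) ht0.le (by ring)
    have hgt : ∀ j, g zt j = g z0 j + t * Δ j := fun j => hgcomb z0 z t j
    have hSt : ∑ j, max (g zt j) 0 ^ 2 ≤
        ∑ j, (max (g z0 j) 0 ^ 2 + 2 * max (g z0 j) 0 * (t * Δ j) + (t * Δ j) ^ 2) := by
      refine Finset.sum_le_sum fun j _ => ?_
      rw [hgt j]
      exact sq_max_le (g z0 j) (t * Δ j)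
    have hsplit : ∑ j, (max (g z0 j) 0 ^ 2 + 2 * max (g z0 j) 0 * (t * Δ j) + (t * Δ j) ^ 2)
        = (∑ j, max (g z0 j) 0 ^ 2) + t * (2 * ∑ j, max (g z0 j) 0 * Δ j)
          + t ^ 2 * ∑ j, Δ j ^ 2 := by
      rw [Finset.sum_add_distrib, Finset.sum_add_distrib]
      congr 1
      · congr 1
        rw [Finset.mul_sum, Finset.mul_sum]
        exact Finset.sum_congr rfl fun j _ => by ring
      · rw [Finset.mul_sum]
        exact Finset.sum_congr rfl fun j _ => by ring
    have hP : ⟪μ0, g z⟫_ℝ - ⟪μ0, g z0⟫_ℝ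
        = 2 * (2 * φ)⁻¹ * ∑ j, max (g z0 j) 0 * Δ j := by
      rw [hinner, hinner, ← Finset.sum_sub_distrib, Finset.mul_sum]
      refine Finset.sum_congr rfl fun j _ => ?_
      rw [hμ0j]
      simp only [hΔ]
      field_simp
    have hc : (0:ℝ) < (2 * φ)⁻¹ := by positivity
    set S0 := ∑ j, max (g z0 j) 0 ^ 2
    set St := ∑ j, max (g zt j) 0 ^ 2
    set P := ∑ j, max (g z0 j) 0 * Δ j
    set Q := ∑ j, Δ j ^ 2
    have h3 : (2 * φ)⁻¹ * St ≤ (2 * φ)⁻¹ * (S0 + t * (2 * P) + t ^ 2 * Q) := by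
      rw [hsplit] at hSt
      exact mul_le_mul_of_nonneg_left hSt hc.le
    have hdiv : f z0 ≤ f z + 2 * (2 * φ)⁻¹ * P + t * C := by
      have h4 : t * f z0 ≤ t * (f z + 2 * (2 * φ)⁻¹ * P + t * C) := by
        simp only [hCdef]
        nlinarith [hmin, hfcomb, h3]
      exact le_of_mul_le_mul_left h4 ht0
    linarith [hdiv, hP]
  -- the saddle property of (z0, μ0)
  have hsad0 : ∀ z ∈ Z, ∀ μ : EuclideanSpace ℝ (Fin m), (∀ j, 0 ≤ μ j) →
      (f z0 + ⟪μ, g z0⟫_ℝ - φ / 2 * ‖μ‖ ^ 2 ≤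
        f z0 + ⟪μ0, g z0⟫_ℝ - φ / 2 * ‖μ0‖ ^ 2) ∧
      (f z0 + ⟪μ0, g z0⟫_ℝ - φ / 2 * ‖μ0‖ ^ 2 ≤
        f z + ⟪μ0, g z⟫_ℝ - φ / 2 * ‖μ0‖ ^ 2) := by
    intro z hz μ hμ
    constructor
    · have := left μ hμ; linarith
    · have := right z hz; linarith
  refine ⟨(z0, μ0), ⟨⟨hz0Z, hμ0pos⟩, ?_⟩, ?_⟩
  · intro z hz μ hμ
    simp only [hgapp]
    exact hsad0 z hz μ hμ
  · rintro ⟨z1, μ1⟩ ⟨⟨hz1Z, hμ1pos⟩, hsad1⟩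
    simp only [hgapp] at hsad1
    -- chain of equalities
    have e1 : f z1 + ⟪μ1, g z1⟫_ℝ - φ / 2 * ‖μ1‖ ^ 2 ≤
        f z0 + ⟪μ1, g z0⟫_ℝ - φ / 2 * ‖μ1‖ ^ 2 := (hsad1 z0 hz0Z μ0 hμ0pos).2
    have e2 : f z0 + ⟪μ1, g z0⟫_ℝ - φ / 2 * ‖μ1‖ ^ 2 ≤
        f z0 + ⟪μ0, g z0⟫_ℝ - φ / 2 * ‖μ0‖ ^ 2 := (hsad0 z1 hz1Z μ1 hμ1pos).1
    have e3 : f z0 + ⟪μ0, g z0⟫_ℝ - φ / 2 * ‖μ0‖ ^ 2 ≤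
        f z1 + ⟪μ0, g z1⟫_ℝ - φ / 2 * ‖μ0‖ ^ 2 := (hsad0 z1 hz1Z μ1 hμ1pos).2
    have e4 : f z1 + ⟪μ0, g z1⟫_ℝ - φ / 2 * ‖μ0‖ ^ 2 ≤
        f z1 + ⟪μ1, g z1⟫_ℝ - φ / 2 * ‖μ1‖ ^ 2 := (hsad1 z0 hz0Z μ0 hμ0pos).1
    -- all four quantities are equal
    have eq12 : f z0 + ⟪μ1, g z0⟫_ℝ - φ / 2 * ‖μ1‖ ^ 2 =
        f z0 + ⟪μ0, g z0⟫_ℝ - φ / 2 * ‖μ0‖ ^ 2 := by linarith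
    -- uniqueness of μ
    have hμeq : μ1 = μ0 := by
      by_contra hne
      set mid : EuclideanSpace ℝ (Fin m) := (2:ℝ)⁻¹ • μ0 + (2:ℝ)⁻¹ • μ1 with hmid
      have hmidpos : ∀ j, 0 ≤ mid j := by
        intro j
        have : mid j = 2⁻¹ * μ0 j + 2⁻¹ * μ1 j := rfl
        rw [this]
        have := hμ0pos j; have := hμ1pos j
        positivity
      have hm1 : ⟪mid, g z0⟫_ℝ = 2⁻¹ * ⟪μ0, g z0⟫_ℝ + 2⁻¹ * ⟪μ1, g z0⟫_ℝ := by
        rw [hmid, inner_add_left, real_inner_smul_left, real_inner_smul_left]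
      have hpar : ‖μ0 + μ1‖ ^ 2 + ‖μ0 - μ1‖ ^ 2 = 2 * ‖μ0‖ ^ 2 + 2 * ‖μ1‖ ^ 2 := by
        have h1 := norm_add_sq_real μ0 μ1
        have h2 := norm_sub_sq_real μ0 μ1
        linarith
      have hm2 : ‖mid‖ ^ 2 = 2⁻¹ * ‖μ0‖ ^ 2 + 2⁻¹ * ‖μ1‖ ^ 2 - 4⁻¹ * ‖μ0 - μ1‖ ^ 2 := by
        have e : mid = (2:ℝ)⁻¹ • (μ0 + μ1) := by rw [hmid, smul_add]
        rw [e, norm_smul, mul_pow]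
        have : ‖(2:ℝ)⁻¹‖ = 2⁻¹ := by
          rw [Real.norm_eq_abs]; norm_num
        rw [this]
        linarith [hpar]
      have hD : 0 < ‖μ0 - μ1‖ ^ 2 :=
        pow_pos (norm_pos_iff.mpr (sub_ne_zero.mpr (Ne.symm hne))) 2
      have hle := (hsad0 z1 hz1Z mid hmidpos).1
      rw [hm1, hm2] at hle
      linarith [hle, eq12, mul_pos hφ hD]
    -- uniqueness of z
    have hzeq : z1 = z0 := by
      by_contra hne
      subst hμeq
      set midz := (1 - (2:ℝ)⁻¹) • z0 + (2:ℝ)⁻¹ • z1 with hmidz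
      have hmidZ : midz ∈ Z := hZconv hz0Z hz1Z (by norm_num) (by norm_num) (by norm_num)
      have hlt : f midz < (1 - (2:ℝ)⁻¹) * f z0 + 2⁻¹ * f z1 :=
        hfconv.2 (Set.mem_univ z0) (Set.mem_univ z1) (Ne.symm hne) (by norm_num) (by norm_num)
          (by norm_num)
      have hgi := hginner μ0 z0 z1 (2:ℝ)⁻¹
      have hle := (hsad0 midz hmidZ μ0 hμ1pos).2
      -- ℓ z0 μ0 = ℓ z1 μ0
      have eqz : f z0 + ⟪μ0, g z0⟫_ℝ = f z1 + ⟪μ0, g z1⟫_ℝ := by linarith [e1, e3]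
      rw [← hmidz] at hgi
      linarith [hle, hlt, hgi, eqz]
    subst hμeq
    subst hzeq
    rfl
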